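/- Let η > 0, γ > 0, r₀ ≥ γ, σ ∈ ℝ and T ∈ ℝ. Define A(t) := (1+γ/η)·e^{η(t−T)} − γ/η, K₁′ := −γ(σ²/(2η) − 1), K₂′ := ((γ+η)/η)·(σ²/(2η) − 2 − log γ), K₃′ := (r₀−γ)/η, K₄′ := (γ+η)/η, and C(t) := K₁′(t−T) + K₂′(e^{η(t−T)} − 1) + K₃′·( log((γ+η)e^{η(t−T)} + r₀ − γ) − log(η+r₀) ) + K₄′·( e^{η(t−T)}·log((γ+η)e^{η(t−T)} + r₀ − γ) − log(r₀+η) ) + γ·∫_t^T log Γ(((γ+η)/γ)e^{η(s−T)}) ds. Then (γ+η)e^{η(t−T)} + r₀ − γ > 0 for all t, C(T) = 0, and C is differentiable at every t ∈ ℝ with C′(t) = −ηA(t) + σ²A(t)/2 − (γ+ηA(t))·log( γ/(r₀ + ηA(t)) ) − γ·log Γ(1 + ηA(t)/γ), where r₀ + ηA(t) = (γ+η)e^{η(t−T)} + r₀ − γ and 1 + ηA(t)/γ = ((γ+η)/γ)e^{η(t−T)}. -/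

import Mathlib

open MeasureTheory Real intervalIntegral

/-- Explicit solution of the ODE for `C` in the non-LQ MFC jump-control example:
`(γ+η)e^{η(t−T)} + r₀ − γ > 0` for all `t`, `C(T) = 0`, and `C` is differentiable with
`C′(t) = −ηA(t) + σ²A(t)/2 − (γ+ηA(t)) log(γ/(r₀+ηA(t))) − γ log Γ(1 + ηA(t)/γ)`, where
`r₀ + ηA(t) = (γ+η)e^{η(t−T)} + r₀ − γ` and `1 + ηA(t)/γ = ((γ+η)/γ)e^{η(t−T)}`. -/
theorem mfc_ODE_solution (η γ r₀ σ T : ℝ) (hη : 0 < η) (hγ : 0 < γ) (hr : γ ≤ r₀)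
    (A C : ℝ → ℝ) (K₁' K₂' K₃' K₄' : ℝ)
    (hA : ∀ t, A t = (1 + γ / η) * Real.exp (η * (t - T)) - γ / η)
    (hK₁ : K₁' = -γ * (σ ^ 2 / (2 * η) - 1))
    (hK₂ : K₂' = ((γ + η) / η) * (σ ^ 2 / (2 * η) - 2 - Real.log γ))
    (hK₃ : K₃' = (r₀ - γ) / η)
    (hK₄ : K₄' = (γ + η) / η)
    (hC : ∀ t, C t = K₁' * (t - T) + K₂' * (Real.exp (η * (t - T)) - 1)
        + K₃' * (Real.log ((γ + η) * Real.exp (η * (t - T)) + r₀ - γ) - Real.log (η + r₀))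
        + K₄' * (Real.exp (η * (t - T)) *
            Real.log ((γ + η) * Real.exp (η * (t - T)) + r₀ - γ) - Real.log (r₀ + η))
        + γ * ∫ s in t..T, Real.log (Real.Gamma (((γ + η) / γ) * Real.exp (η * (s - T))))) :
    (∀ t : ℝ, 0 < (γ + η) * Real.exp (η * (t - T)) + r₀ - γ) ∧
    C T = 0 ∧
    ∀ t : ℝ,
      HasDerivAt C (-(η * A t) + σ ^ 2 * A t / 2
        - (γ + η * A t) * Real.log (γ / (r₀ + η * A t))
        - γ * Real.log (Real.Gamma (1 + η * A t / γ))) t ∧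
      r₀ + η * A t = (γ + η) * Real.exp (η * (t - T)) + r₀ - γ ∧
      1 + η * A t / γ = ((γ + η) / γ) * Real.exp (η * (t - T)) := by
  have hP : ∀ t : ℝ, 0 < (γ + η) * Real.exp (η * (t - T)) + r₀ - γ := by
    intro t
    have h1 := Real.exp_pos (η * (t - T))
    nlinarith
  set f : ℝ → ℝ := fun s => Real.log (Real.Gamma (((γ + η) / γ) * Real.exp (η * (s - T)))) with hf_def
  have hgpos : ∀ s : ℝ, 0 < ((γ + η) / γ) * Real.exp (η * (s - T)) := by
    intro s; positivity
  have hf : Continuous f := by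
    rw [continuous_iff_continuousAt]
    intro s
    have harg : ContinuousAt (fun s : ℝ => ((γ + η) / γ) * Real.exp (η * (s - T))) s := by
      fun_prop
    have hG : ContinuousAt Real.Gamma (((γ + η) / γ) * Real.exp (η * (s - T))) :=
      (Real.differentiableAt_Gamma (fun m => by
        have h0 := hgpos s
        have hm : -(m : ℝ) ≤ 0 := by
          simp [neg_nonpos]
        exact ne_of_gt (lt_of_le_of_lt hm h0))).continuousAt
    have hL : ContinuousAt Real.log (Real.Gamma (((γ + η) / γ) * Real.exp (η * (s - T)))) :=
      Real.continuousAt_log (ne_of_gt (Real.Gamma_pos_of_pos (hgpos s)))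
    have hGg : ContinuousAt (Real.Gamma ∘ (fun s : ℝ => ((γ + η) / γ) * Real.exp (η * (s - T)))) s :=
      ContinuousAt.comp (x := s) hG harg
    have h2 : ContinuousAt (Real.log ∘ (Real.Gamma ∘ (fun s : ℝ => ((γ + η) / γ) * Real.exp (η * (s - T))))) s :=
      ContinuousAt.comp (x := s) hL hGg
    simpa [Function.comp_def, hf_def] using h2
  refine ⟨hP, ?_, ?_⟩
  · rw [hC T]
    simp only [sub_self, mul_zero, Real.exp_zero, intervalIntegral.integral_same, mul_zero]
    rw [show (γ + η) * 1 + r₀ - γ = η + r₀ by ring, show r₀ + η = η + r₀ from add_comm _ _]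
    ring
  · intro t
    have hEq : C = fun t => K₁' * (t - T) + K₂' * (Real.exp (η * (t - T)) - 1)
        + K₃' * (Real.log ((γ + η) * Real.exp (η * (t - T)) + r₀ - γ) - Real.log (η + r₀))
        + K₄' * (Real.exp (η * (t - T)) *
            Real.log ((γ + η) * Real.exp (η * (t - T)) + r₀ - γ) - Real.log (r₀ + η))
        + γ * ∫ s in t..T, f s := funext hC
    have hE : HasDerivAt (fun t : ℝ => Real.exp (η * (t - T))) (η * Real.exp (η * (t - T))) t := by
      have h0 : HasDerivAt (fun t : ℝ => η * (t - T)) η t := by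
        simpa using ((hasDerivAt_id t).sub_const T).const_mul η
      simpa [mul_comm] using h0.exp
    set E := Real.exp (η * (t - T)) with hEdef
    have hPd : HasDerivAt (fun t : ℝ => (γ + η) * Real.exp (η * (t - T)) + r₀ - γ)
        ((γ + η) * (η * E)) t := ((hE.const_mul (γ + η)).add_const r₀).sub_const γ
    have hlog : HasDerivAt (fun t : ℝ => Real.log ((γ + η) * Real.exp (η * (t - T)) + r₀ - γ))
        ((γ + η) * (η * E) / ((γ + η) * E + r₀ - γ)) t := hPd.log (ne_of_gt (hP t))
    have h1 : HasDerivAt (fun t : ℝ => K₁' * (t - T)) K₁' t := by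
      simpa using ((hasDerivAt_id t).sub_const T).const_mul K₁'
    have h2 : HasDerivAt (fun t : ℝ => K₂' * (Real.exp (η * (t - T)) - 1))
        (K₂' * (η * E)) t := (hE.sub_const 1).const_mul K₂'
    have h3 : HasDerivAt (fun t : ℝ => K₃' * (Real.log ((γ + η) * Real.exp (η * (t - T)) + r₀ - γ)
        - Real.log (η + r₀))) (K₃' * ((γ + η) * (η * E) / ((γ + η) * E + r₀ - γ))) t :=
      (hlog.sub_const _).const_mul K₃'
    have h4 : HasDerivAt (fun t : ℝ => K₄' * (Real.exp (η * (t - T)) *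
        Real.log ((γ + η) * Real.exp (η * (t - T)) + r₀ - γ) - Real.log (r₀ + η)))
        (K₄' * ((η * E) * Real.log ((γ + η) * E + r₀ - γ)
          + E * ((γ + η) * (η * E) / ((γ + η) * E + r₀ - γ)))) t :=
      ((hE.mul hlog).sub_const _).const_mul K₄'
    have h5 : HasDerivAt (fun t : ℝ => γ * ∫ s in t..T, f s) (γ * (-f t)) t := by
      refine HasDerivAt.const_mul γ ?_
      exact intervalIntegral.integral_hasDerivAt_left (hf.intervalIntegrable t T)
        (hf.stronglyMeasurableAtFilter _ _) hf.continuousAt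
    have hD := (((h1.add h2).add h3).add h4).add h5
    simp only [Pi.add_def] at hD
    rw [← hEq] at hD
    have hrA : r₀ + η * A t = (γ + η) * E + r₀ - γ := by
      rw [hA t]; field_simp; ring
    have hoA : 1 + η * A t / γ = ((γ + η) / γ) * E := by
      rw [hA t]; field_simp; ring
    refine ⟨?_, hrA, hoA⟩
    refine hD.congr_deriv ?_
    rw [hrA, hoA, hA t, hK₁, hK₂, hK₃, hK₄]
    rw [Real.log_div (ne_of_gt hγ) (ne_of_gt (hP t))]
    have hPne : (γ + η) * E + r₀ - γ ≠ 0 := ne_of_gt (hP t)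
    simp only [hf_def, ← hEdef]
    generalize Real.log ((γ + η) * E + r₀ - γ) = LP
    generalize Real.log (Real.Gamma ((γ + η) / γ * E)) = LG
    generalize Real.log γ = Lγ
    field_simp
    ring
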